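/- For every integer K ≥ 1, the locus {F_K = 1} is a Poisson subvariety of the Flaschka–Newell bracket: in the Laurent-polynomial ring ℂ[s_1, …, s_{2K+2}, λ, λ^{−1}], for every coordinate x ∈ {s_1, …, s_{2K+2}, λ} and every matrix entry (a,b), the bracket {x, (F_K − 1)_{ab}}_{FN} lies in the ideal generated by the four entries of F_K − 1. -/

import Mathlib

noncomputable section

open MvPolynomial

/-- The Laurent-polynomial ring `ℂ[s_1, …, s_{2K+2}, λ, λ⁻¹]` is encoded as the polynomial
ring `ℂ[s_1, …, s_{2K+2}, λ, μ]` (with `μ` playing the role of `λ⁻¹`), in which one always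
works modulo the relation `λμ − 1`.  Variables `0, …, 2K+1` are `s_1, …, s_{2K+2}`,
variable `2K+2` is `λ` and variable `2K+3` is `μ = λ⁻¹`. -/
abbrev RK (K : ℕ) := MvPolynomial (Fin (2*K+4)) ℂ

/-- The variable `s_{j+1}` (0-based `j`). -/
def sVar (K : ℕ) (j : Fin (2*K+2)) : Fin (2*K+4) := ⟨(j:ℕ), by have := j.isLt; omega⟩

/-- The variable `λ`. -/
def lamVar (K : ℕ) : Fin (2*K+4) := ⟨2*K+2, by omega⟩

/-- The variable `μ = λ⁻¹`. -/
def muVar (K : ℕ) : Fin (2*K+4) := ⟨2*K+3, by omega⟩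

/-- The derivation `∂/∂λ` of the Laurent ring, acting on representatives:
`∂λ = ∂/∂λ − μ² ∂/∂μ` (since `∂(λ⁻¹)/∂λ = −λ⁻²`). -/
def Dlam (K : ℕ) (f : RK K) : RK K :=
  pderiv (lamVar K) f - (X (muVar K))^2 * pderiv (muVar K) f

/-- The structure constant `{s_{j+1}, s_{l+1}}_{FN}` for 0-based `j < l`:
`δ_{j+1,l} − δ_{j,0}δ_{l,2K+1}·λ^{−2} + (−1)^{j+l+1} s_j s_l`, with `λ^{−2}` written `μ²`. -/
def cSSP (K : ℕ) (j l : Fin (2*K+2)) : RK K :=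
  (if (j:ℕ)+1 = (l:ℕ) then 1 else 0)
  - (if (j:ℕ) = 0 ∧ (l:ℕ) = 2*K+1 then (X (muVar K))^2 else 0)
  + (-1:RK K)^((j:ℕ)+(l:ℕ)+1) * X (sVar K j) * X (sVar K l)

/-- The structure constant `{s_{j+1}, λ}_{FN} = (−1)^{j+1} s_{j+1} λ` (0-based `j`). -/
def cSLP (K : ℕ) (j : Fin (2*K+2)) : RK K :=
  (-1:RK K)^((j:ℕ)+1) * X (sVar K j) * X (lamVar K)

/-- The Flaschka–Newell bracket on the (Laurent-)polynomial ring: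
`{f,g} = Σ_{j<l} {s_j,s_l}·(∂_j f ∂_l g − ∂_l f ∂_j g) + Σ_j {s_j,λ}·(∂_j f ∂_λ g − ∂_λ f ∂_j g)`. -/
def fnBrP (K : ℕ) (f g : RK K) : RK K :=
  (∑ j : Fin (2*K+2), ∑ l : Fin (2*K+2),
    if (j:ℕ) < (l:ℕ) then
      cSSP K j l * (pderiv (sVar K j) f * pderiv (sVar K l) g
                    - pderiv (sVar K l) f * pderiv (sVar K j) g)
    else 0)
  + ∑ j : Fin (2*K+2),
      cSLP K j * (pderiv (sVar K j) f * Dlam K g - Dlam K f * pderiv (sVar K j) g)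

/-- Upper-triangular unipotent 2×2 matrix. -/
def UmatP (K : ℕ) (a : RK K) : Matrix (Fin 2) (Fin 2) (RK K) := !![1, a; 0, 1]

/-- Lower-triangular unipotent 2×2 matrix. -/
def LmatP (K : ℕ) (a : RK K) : Matrix (Fin 2) (Fin 2) (RK K) := !![1, 0; a, 1]

/-- The matrix `F_K = [[1,s_1],[0,1]]·[[1,0],[s_2,1]] ⋯ [[1,s_{2K+1}],[0,1]]·
[[1,0],[s_{2K+2},1]]·diag(λ, λ⁻¹)` over the Laurent-polynomial ring (`λ⁻¹` written `μ`). -/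
def FmatP (K : ℕ) : Matrix (Fin 2) (Fin 2) (RK K) :=
  ((List.ofFn fun i : Fin (K+1) =>
      UmatP K (X (sVar K ⟨2*(i:ℕ), by have := i.isLt; omega⟩)) *
      LmatP K (X (sVar K ⟨2*(i:ℕ)+1, by have := i.isLt; omega⟩))).prod)
    * !![X (lamVar K), 0; 0, X (muVar K)]

/-- The coordinate `x` among `s_1, …, s_{2K+2}, λ`. -/
def coordVar (K : ℕ) (i : Fin (2*K+3)) : Fin (2*K+4) :=
  if h : (i:ℕ) < 2*K+2 then sVar K ⟨(i:ℕ), h⟩ else lamVar K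

namespace FNwork

abbrev M2 (K : ℕ) := Matrix (Fin 2) (Fin 2) (RK K)

def sv (K l : ℕ) : Fin (2*K+4) :=
  ⟨l % (2*K+2), by have := Nat.mod_lt l (show 0 < 2*K+2 by omega); omega⟩

def Em (K l : ℕ) : M2 K :=
  if l % 2 = 0 then !![1, X (sv K l); 0, 1] else !![1, 0; X (sv K l), 1]
def Emi (K l : ℕ) : M2 K :=
  if l % 2 = 0 then !![1, -X (sv K l); 0, 1] else !![1, 0; -X (sv K l), 1]
def Pm (K : ℕ) : ℕ → M2 K
  | 0 => 1
  | l+1 => Pm K l * Em K l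
def Pmi (K : ℕ) : ℕ → M2 K
  | 0 => 1
  | l+1 => Emi K l * Pmi K l
def ee (K : ℕ) : M2 K := !![0,1;0,0]
def ff (K : ℕ) : M2 K := !![0,0;1,0]
def em (K l : ℕ) : M2 K := if l % 2 = 0 then ee K else ff K
def sg (K : ℕ) : M2 K := !![1,0;0,-1]
def gg (K : ℕ) : M2 K := !![0,0;0,1]
def eta (K l : ℕ) : M2 K := Pm K l * em K l * Pmi K l
def Gm (K l : ℕ) : M2 K := Pm K l * sg K * Pmi K l
def Dm (K : ℕ) : M2 K := !![X (lamVar K), 0; 0, X (muVar K)]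
def Dmi (K : ℕ) : M2 K := !![X (muVar K), 0; 0, X (lamVar K)]
def lm (K : ℕ) : RK K := X (lamVar K) * X (muVar K)
def Fm (K : ℕ) : M2 K := Pm K (2*K+2) * Dm K
def Fi (K : ℕ) : M2 K := Dmi K * Pmi K (2*K+2)
def Nm (K : ℕ) : M2 K := !![1, 0; 0, -lm K]
def Tt (K l : ℕ) : M2 K := ((-1 : RK K)^(l+1) * 2 * X (sv K l)) • eta K l
def cS (K j l : ℕ) : RK K :=
  (if j+1 = l then 1 else 0)
  - (if j = 0 ∧ l = 2*K+1 then (X (muVar K))^2 else 0)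
  + (-1 : RK K)^(j+l+1) * X (sv K j) * X (sv K l)

variable {K : ℕ}

lemma neg_one_pow_even {l : ℕ} (h : l % 2 = 0) : (-1 : RK K)^l = 1 :=
  (Nat.even_iff.2 h).neg_one_pow
lemma neg_one_pow_odd {l : ℕ} (h : l % 2 = 1) : (-1 : RK K)^l = -1 :=
  (Nat.odd_iff.2 h).neg_one_pow

lemma EmEmi (l : ℕ) : Em K l * Emi K l = 1 := by
  rcases Nat.mod_two_eq_zero_or_one l with h | h <;>
  · refine Matrix.ext fun i j => ?_
    fin_cases i <;> fin_cases j <;>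
      (simp [Em, Emi, h, Matrix.mul_apply, Fin.sum_univ_two, Matrix.one_apply]; try ring)

lemma EmiEm (l : ℕ) : Emi K l * Em K l = 1 := by
  rcases Nat.mod_two_eq_zero_or_one l with h | h <;>
  · refine Matrix.ext fun i j => ?_
    fin_cases i <;> fin_cases j <;>
      (simp [Em, Emi, h, Matrix.mul_apply, Fin.sum_univ_two, Matrix.one_apply]; try ring)

lemma conj_same (l : ℕ) : Em K l * em K l * Emi K l = em K l := by
  rcases Nat.mod_two_eq_zero_or_one l with h | h <;>
  · refine Matrix.ext fun i j => ?_
    fin_cases i <;> fin_cases j <;>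
      (simp [Em, Emi, em, ee, ff, h, Matrix.mul_apply, Fin.sum_univ_two]; try ring)

lemma em_succ_parity (l : ℕ) : em K (l+2) = em K l := by
  simp only [em, Nat.add_mod_right]

lemma conj_opp (l : ℕ) :
    Em K l * em K (l+1) * Emi K l
      = em K (l+1) + (((-1 : RK K)^l * X (sv K l)) • sg K - (X (sv K l)^2 : RK K) • em K l) := by
  rcases Nat.mod_two_eq_zero_or_one l with h | h
  · have h1 : (l+1) % 2 = 1 := by omega
    rw [neg_one_pow_even h]
    refine Matrix.ext fun i j => ?_
    fin_cases i <;> fin_cases j <;>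
      (simp [Em, Emi, em, ee, ff, sg, h, h1, Matrix.mul_apply, Fin.sum_univ_two]; try ring)
  · have h1 : (l+1) % 2 = 0 := by omega
    rw [neg_one_pow_odd h]
    refine Matrix.ext fun i j => ?_
    fin_cases i <;> fin_cases j <;>
      (simp [Em, Emi, em, ee, ff, sg, h, h1, Matrix.mul_apply, Fin.sum_univ_two]; try ring)

lemma conj_sg (l : ℕ) :
    Em K l * sg K * Emi K l
      = sg K + ((-1 : RK K)^(l+1) * 2 * X (sv K l)) • em K l := by
  rcases Nat.mod_two_eq_zero_or_one l with h | h
  · have h1 : (l+1) % 2 = 1 := by omega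
    rw [neg_one_pow_odd h1]
    refine Matrix.ext fun i j => ?_
    fin_cases i <;> fin_cases j <;>
      (simp [Em, Emi, em, ee, ff, sg, h, Matrix.mul_apply, Fin.sum_univ_two]; try ring)
  · have h1 : (l+1) % 2 = 0 := by omega
    rw [neg_one_pow_even h1]
    refine Matrix.ext fun i j => ?_
    fin_cases i <;> fin_cases j <;>
      (simp [Em, Emi, em, ee, ff, sg, h, Matrix.mul_apply, Fin.sum_univ_two]; try ring)

lemma em_mul_Em (l : ℕ) : em K l * Em K l = em K l := by
  rcases Nat.mod_two_eq_zero_or_one l with h | h <;>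
  · refine Matrix.ext fun i j => ?_
    fin_cases i <;> fin_cases j <;>
      (simp [Em, em, ee, ff, h, Matrix.mul_apply, Fin.sum_univ_two]; try ring)

lemma DeeD : Dm K * ee K * Dmi K = (X (lamVar K)^2 : RK K) • ee K := by
  refine Matrix.ext fun i j => ?_
  fin_cases i <;> fin_cases j <;>
    (simp [Dm, Dmi, ee, Matrix.mul_apply, Fin.sum_univ_two]; try ring)

lemma DffD : Dm K * ff K * Dmi K = (X (muVar K)^2 : RK K) • ff K := by
  refine Matrix.ext fun i j => ?_
  fin_cases i <;> fin_cases j <;>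
    (simp [Dm, Dmi, ff, Matrix.mul_apply, Fin.sum_univ_two]; try ring)

lemma DsgD : Dm K * sg K * Dmi K = lm K • sg K := by
  refine Matrix.ext fun i j => ?_
  fin_cases i <;> fin_cases j <;>
    (simp [Dm, Dmi, sg, lm, Matrix.mul_apply, Fin.sum_univ_two]; try ring)

lemma DmiDm : Dmi K * Dm K = lm K • 1 := by
  refine Matrix.ext fun i j => ?_
  fin_cases i <;> fin_cases j <;>
    (simp [Dm, Dmi, lm, Matrix.mul_apply, Fin.sum_univ_two, Matrix.one_apply]; try ring)

lemma Nm_eq : Nm K = sg K - (lm K - 1) • gg K := by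
  refine Matrix.ext fun i j => ?_
  fin_cases i <;> fin_cases j <;> (simp [Nm, sg, gg, lm]; try ring)


lemma PmPmi : ∀ l, Pm K l * Pmi K l = 1
  | 0 => by simp [Pm, Pmi]
  | (l+1) => by
    show Pm K l * Em K l * (Emi K l * Pmi K l) = 1
    calc Pm K l * Em K l * (Emi K l * Pmi K l)
        = Pm K l * (Em K l * Emi K l) * Pmi K l := by noncomm_ring
      _ = 1 := by rw [EmEmi]; rw [mul_one]; exact PmPmi l

lemma PmiPm : ∀ l, Pmi K l * Pm K l = 1
  | 0 => by simp [Pm, Pmi]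
  | (l+1) => by
    show Emi K l * Pmi K l * (Pm K l * Em K l) = 1
    calc Emi K l * Pmi K l * (Pm K l * Em K l)
        = Emi K l * (Pmi K l * Pm K l) * Em K l := by noncomm_ring
      _ = 1 := by rw [PmiPm l]; rw [mul_one]; exact EmiEm l

lemma sandwich {A B : M2 K} (l : ℕ) (h : Em K l * A * Emi K l = B) :
    Pm K (l+1) * A * Pmi K (l+1) = Pm K l * B * Pmi K l := by
  show Pm K l * Em K l * A * (Emi K l * Pmi K l) = _
  rw [← h]; noncomm_ring

lemma tel (l : ℕ) : Gm K (l+1) = Gm K l + Tt K l := by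
  have h := sandwich (K := K) l (conj_sg l)
  show Pm K (l+1) * sg K * Pmi K (l+1) = _
  rw [h, mul_add, add_mul, mul_smul_comm, smul_mul_assoc]
  rfl

lemma telS (m : ℕ) : ∑ l ∈ Finset.range m, Tt K l = Gm K m - sg K := by
  induction m with
  | zero => simp [Gm, Pm, Pmi]
  | succ m ih => rw [Finset.sum_range_succ, ih, tel m]; abel

lemma eta_zero : eta K 0 = ee K := by
  simp [eta, em, Pm, Pmi]

lemma L60 : eta K 1 = ff K + ((X (sv K 0) : RK K) • sg K - (X (sv K 0)^2 : RK K) • eta K 0) := by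
  have h := sandwich (K := K) 0 (conj_opp 0)
  have h0 : eta K 1 = Pm K 0 * (em K 1 + (((-1 : RK K)^0 * X (sv K 0)) • sg K
      - (X (sv K 0)^2 : RK K) • em K 0)) * Pmi K 0 := h
  rw [h0]
  simp [Pm, Pmi, em, eta, ff, pow_zero, one_mul]

lemma L6 (k : ℕ) : eta K (k+2)
    = eta K k + (((-1 : RK K)^(k+1) * X (sv K (k+1))) • Gm K (k+1)
      - (X (sv K (k+1))^2 : RK K) • eta K (k+1)) := by
  have h : eta K (k+2) = Pm K (k+1) * (em K (k+2) + (((-1 : RK K)^(k+1) * X (sv K (k+1))) • sg K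
      - (X (sv K (k+1))^2 : RK K) • em K (k+1))) * Pmi K (k+1) := by
    have := sandwich (K := K) (k+1) (conj_opp (k+1))
    exact this
  have h2 : Pm K (k+1) * em K (k+2) * Pmi K (k+1) = eta K k := by
    rw [em_succ_parity]
    have : Em K k * em K k * Emi K k = em K k := conj_same k
    have h3 := sandwich (K := K) k this
    exact h3
  rw [h, mul_add, add_mul, mul_sub, sub_mul, mul_smul_comm, mul_smul_comm,
    smul_mul_assoc, smul_mul_assoc, h2]
  rfl

lemma FiF : Fi K * Fm K = lm K • 1 := by
  show Dmi K * Pmi K (2*K+2) * (Pm K (2*K+2) * Dm K) = _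
  calc Dmi K * Pmi K (2*K+2) * (Pm K (2*K+2) * Dm K)
      = Dmi K * (Pmi K (2*K+2) * Pm K (2*K+2)) * Dm K := by noncomm_ring
    _ = Dmi K * Dm K := by rw [PmiPm]; rw [mul_one]
    _ = lm K • 1 := DmiDm

lemma Fsand {A B : M2 K} (h : Dm K * A * Dmi K = B) :
    Fm K * A * Fi K = Pm K (2*K+2) * B * Pmi K (2*K+2) := by
  show Pm K (2*K+2) * Dm K * A * (Dmi K * Pmi K (2*K+2)) = _
  rw [← h]; noncomm_ring

lemma FconjEE : Fm K * ee K * Fi K = (X (lamVar K)^2 : RK K) • eta K (2*K+2) := by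
  rw [Fsand DeeD, mul_smul_comm, smul_mul_assoc]
  have : em K (2*K+2) = ee K := by simp [em, Nat.mul_mod_right]
  rw [eta, this]

lemma eta_top : eta K (2*K+1) = Pm K (2*K+2) * ff K * Pmi K (2*K+2) := by
  have hodd : (2*K+1) % 2 = 1 := by omega
  have hff : em K (2*K+1) = ff K := by simp [em, hodd]
  have h := sandwich (K := K) (2*K+1) (conj_same (2*K+1))
  rw [eta, hff]
  rw [hff] at h
  exact h.symm

lemma FconjFF : Fm K * ff K * Fi K = (X (muVar K)^2 : RK K) • eta K (2*K+1) := by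
  rw [Fsand DffD, mul_smul_comm, smul_mul_assoc, eta_top]

lemma FconjSg : Fm K * sg K * Fi K = lm K • Gm K (2*K+2) := by
  rw [Fsand DsgD, mul_smul_comm, smul_mul_assoc]
  rfl


lemma sv_ne_lam (l : ℕ) : sv K l ≠ lamVar K := by
  have := Nat.mod_lt l (show 0 < 2*K+2 by omega)
  exact Fin.ne_of_val_ne (by simp [sv, lamVar]; omega)

lemma sv_ne_mu (l : ℕ) : sv K l ≠ muVar K := by
  have := Nat.mod_lt l (show 0 < 2*K+2 by omega)
  exact Fin.ne_of_val_ne (by simp [sv, muVar]; omega)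

lemma lam_ne_mu : lamVar K ≠ muVar K := by
  exact Fin.ne_of_val_ne (by simp [lamVar, muVar])

lemma sv_inj {j l : ℕ} (hj : j < 2*K+2) (hl : l < 2*K+2) (hne : j ≠ l) :
    sv K j ≠ sv K l := by
  refine Fin.ne_of_val_ne ?_
  simp only [sv]
  rw [Nat.mod_eq_of_lt hj, Nat.mod_eq_of_lt hl]
  exact hne

def dmap (v : Fin (2*K+4)) (M : M2 K) : M2 K := M.map (fun p => pderiv v p)

lemma dmap_mul (v : Fin (2*K+4)) (A B : M2 K) :
    dmap v (A * B) = dmap v A * B + A * dmap v B := by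
  refine Matrix.ext fun i j => ?_
  simp [dmap, Matrix.map_apply, Matrix.mul_apply, Fin.sum_univ_two, pderiv_mul]
  ring

lemma dmap_Em_ne {v : Fin (2*K+4)} {l : ℕ} (hv : sv K l ≠ v) : dmap v (Em K l) = 0 := by
  rcases Nat.mod_two_eq_zero_or_one l with h | h <;>
  · refine Matrix.ext fun i j => ?_
    fin_cases i <;> fin_cases j <;>
      simp [dmap, Em, h, Matrix.map_apply, pderiv_X_of_ne hv]

lemma dmap_Em_self (l : ℕ) : dmap (sv K l) (Em K l) = em K l := by
  rcases Nat.mod_two_eq_zero_or_one l with h | h <;>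
  · refine Matrix.ext fun i j => ?_
    fin_cases i <;> fin_cases j <;>
      simp [dmap, Em, em, ee, ff, h, Matrix.map_apply, pderiv_X_self]

lemma dmap_Pm_zero {v : Fin (2*K+4)} : ∀ i : ℕ, (∀ t, t < i → sv K t ≠ v) →
    dmap v (Pm K i) = 0
  | 0, _ => by
    refine Matrix.ext fun i j => ?_
    simp [dmap, Pm, Matrix.map_apply, Matrix.one_apply]
    split_ifs <;> simp
  | (i+1), h => by
    show dmap v (Pm K i * Em K i) = 0
    rw [dmap_mul, dmap_Pm_zero i (fun t ht => h t (by omega)),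
      dmap_Em_ne (h i (by omega))]
    simp

lemma dmap_Pm_lam (i : ℕ) : dmap (lamVar K) (Pm K i) = 0 :=
  dmap_Pm_zero i (fun t _ => sv_ne_lam t)

lemma dmap_Pm_mu (i : ℕ) : dmap (muVar K) (Pm K i) = 0 :=
  dmap_Pm_zero i (fun t _ => sv_ne_mu t)

lemma dmap_Pm_eta {l : ℕ} (hl : l < 2*K+2) :
    ∀ d : ℕ, l+1+d ≤ 2*K+2 → dmap (sv K l) (Pm K (l+1+d)) = eta K l * Pm K (l+1+d)
  | 0, _ => by
    show dmap (sv K l) (Pm K l * Em K l) = eta K l * (Pm K l * Em K l)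
    rw [dmap_mul, dmap_Pm_zero l (fun t ht => sv_inj (by omega) hl (by omega)),
      dmap_Em_self]
    have : eta K l * (Pm K l * Em K l) = Pm K l * (em K l * Em K l) := by
      show Pm K l * em K l * Pmi K l * (Pm K l * Em K l) = _
      calc Pm K l * em K l * Pmi K l * (Pm K l * Em K l)
          = Pm K l * em K l * (Pmi K l * Pm K l) * Em K l := by noncomm_ring
        _ = Pm K l * (em K l * Em K l) := by rw [PmiPm]; noncomm_ring
    rw [this, em_mul_Em]
    simp
  | (d+1), hd => by
    have heq : l+1+(d+1) = (l+1+d)+1 := by omega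
    rw [heq]
    show dmap (sv K l) (Pm K (l+1+d) * Em K (l+1+d)) = _
    rw [dmap_mul, dmap_Pm_eta hl d (by omega),
      dmap_Em_ne (sv_inj (by omega) hl (by omega)).symm.symm]
    · show eta K l * Pm K (l+1+d) * Em K (l+1+d) + Pm K (l+1+d) * 0
          = eta K l * (Pm K (l+1+d) * Em K (l+1+d))
      rw [mul_zero, add_zero, mul_assoc]

lemma dmap_Dm_s {l : ℕ} : dmap (sv K l) (Dm K) = 0 := by
  refine Matrix.ext fun i j => ?_
  fin_cases i <;> fin_cases j <;>
    simp [dmap, Dm, Matrix.map_apply, pderiv_X_of_ne (sv_ne_lam l).symm.symm,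
      pderiv_X_of_ne ((sv_ne_lam l).symm), pderiv_X_of_ne ((sv_ne_mu l).symm)]

lemma dmap_Fm_s {l : ℕ} (hl : l < 2*K+2) :
    dmap (sv K l) (Fm K) = eta K l * Fm K := by
  show dmap (sv K l) (Pm K (2*K+2) * Dm K) = eta K l * (Pm K (2*K+2) * Dm K)
  have h2 : 2*K+2 = l+1+(2*K+1-l) := by omega
  rw [dmap_mul, dmap_Dm_s, mul_zero, add_zero, h2,
    dmap_Pm_eta hl (2*K+1-l) (by omega), mul_assoc]

lemma dmap_Fm_lam : dmap (lamVar K) (Fm K) = Pm K (2*K+2) * !![1,0;0,0] := by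
  show dmap (lamVar K) (Pm K (2*K+2) * Dm K) = _
  rw [dmap_mul, dmap_Pm_lam]
  have : dmap (lamVar K) (Dm K) = !![1,0;0,0] := by
    refine Matrix.ext fun i j => ?_
    fin_cases i <;> fin_cases j <;>
      simp [dmap, Dm, Matrix.map_apply, pderiv_X_self, pderiv_X_of_ne lam_ne_mu, Pi.single_eq_of_ne (lam_ne_mu (K:=K)).symm]
  rw [this]
  simp

lemma dmap_Fm_mu : dmap (muVar K) (Fm K) = Pm K (2*K+2) * !![0,0;0,1] := by
  show dmap (muVar K) (Pm K (2*K+2) * Dm K) = _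
  rw [dmap_mul, dmap_Pm_mu]
  have : dmap (muVar K) (Dm K) = !![0,0;0,1] := by
    refine Matrix.ext fun i j => ?_
    fin_cases i <;> fin_cases j <;>
      simp [dmap, Dm, Matrix.map_apply, pderiv_X_self, pderiv_X_of_ne lam_ne_mu.symm, Pi.single_eq_of_ne (lam_ne_mu (K:=K))]
  rw [this]
  simp


def Ig (K : ℕ) : Ideal (RK K) :=
  Ideal.span ({(Fm K - 1) 0 0, (Fm K - 1) 0 1,
               (Fm K - 1) 1 0, (Fm K - 1) 1 1,
               X (lamVar K) * X (muVar K) - 1} : Set (RK K))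

def MI (K : ℕ) (M : M2 K) : Prop := ∀ a b : Fin 2, M a b ∈ Ig K

lemma lm_mem : lm K - 1 ∈ Ig K :=
  Ideal.subset_span (by simp [lm])

lemma MI_F1 : MI K (Fm K - 1) := by
  intro a b
  fin_cases a <;> fin_cases b <;> exact Ideal.subset_span (by simp)

lemma MI.add {A B : M2 K} (hA : MI K A) (hB : MI K B) : MI K (A + B) :=
  fun a b => by rw [Matrix.add_apply]; exact Ideal.add_mem _ (hA a b) (hB a b)

lemma MI.sub {A B : M2 K} (hA : MI K A) (hB : MI K B) : MI K (A - B) :=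
  fun a b => by rw [Matrix.sub_apply]; exact Ideal.sub_mem _ (hA a b) (hB a b)

lemma MI.neg {A : M2 K} (hA : MI K A) : MI K (-A) :=
  fun a b => by rw [Matrix.neg_apply]; exact neg_mem (hA a b)

lemma MI.smul (r : RK K) {A : M2 K} (hA : MI K A) : MI K (r • A) :=
  fun a b => by rw [Matrix.smul_apply, smul_eq_mul]; exact Ideal.mul_mem_left _ _ (hA a b)

lemma MI.scalar {r : RK K} (hr : r ∈ Ig K) (A : M2 K) : MI K (r • A) :=
  fun a b => by rw [Matrix.smul_apply, smul_eq_mul]; exact Ideal.mul_mem_right _ _ hr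

lemma MI.mulL (A : M2 K) {B : M2 K} (hB : MI K B) : MI K (A * B) := by
  intro a b
  rw [Matrix.mul_apply]
  exact Ideal.sum_mem _ (fun k _ => Ideal.mul_mem_left _ _ (hB k b))

lemma MI.mulR {B : M2 K} (hB : MI K B) (A : M2 K) : MI K (B * A) := by
  intro a b
  rw [Matrix.mul_apply]
  exact Ideal.sum_mem _ (fun k _ => Ideal.mul_mem_right _ _ (hB a k))

lemma MI_Fi : MI K (Fi K - lm K • 1) := by
  have h : Fi K - lm K • 1 = -(Fi K * (Fm K - 1)) := by
    rw [mul_sub, FiF, mul_one]; abel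
  rw [h]
  exact (MI.mulL _ MI_F1).neg

lemma MI_conj (M : M2 K) : MI K (Fm K * M * Fi K - lm K • M) := by
  have h : Fm K * M * Fi K - lm K • M
      = (Fm K - 1) * (M * Fi K) + M * (Fi K - lm K • 1) := by
    simp only [sub_mul, mul_sub, one_mul, mul_one, mul_smul_comm, mul_assoc]
    abel
  rw [h]
  exact ((MI_F1).mulR _).add (MI.mulL _ MI_Fi)

lemma MI_Gn : MI K (Gm K (2*K+2) - sg K) := by
  have h1 : MI K (lm K • (Gm K (2*K+2) - sg K)) := by
    have h := MI_conj (sg K)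
    rw [FconjSg] at h
    rw [smul_sub]
    exact h
  have h2 : Gm K (2*K+2) - sg K
      = lm K • (Gm K (2*K+2) - sg K) - (lm K - 1) • (Gm K (2*K+2) - sg K) := by
    rw [sub_smul, one_smul]; abel
  rw [h2]
  exact h1.sub (MI.scalar lm_mem _)

lemma MI_b1 : MI K (ff K - (X (muVar K)^2 : RK K) • eta K (2*K+1)) := by
  have h : ff K - (X (muVar K)^2 : RK K) • eta K (2*K+1)
      = -(Fm K * ff K * Fi K - lm K • ff K) - (lm K - 1) • ff K := by
    rw [FconjFF, sub_smul, one_smul]; abel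
  rw [h]
  exact ((MI_conj _).neg).sub (MI.scalar lm_mem _)

lemma MI_b2 : MI K ((X (muVar K)^2 : RK K) • eta K 0 - eta K (2*K+2)) := by
  have hlm : (lm K - 1) * (lm K + 1) ∈ Ig K := Ideal.mul_mem_right _ _ lm_mem
  have h : (X (muVar K)^2 : RK K) • eta K 0 - eta K (2*K+2)
      = -((X (muVar K)^2 : RK K) • (Fm K * ee K * Fi K - lm K • ee K))
        - (lm K - 1) • ((X (muVar K)^2 : RK K) • ee K)
        + ((lm K - 1) * (lm K + 1)) • eta K (2*K+2) := by
    rw [FconjEE, eta_zero]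
    rw [smul_sub]
    simp only [smul_smul, lm]
    module
  rw [h]
  refine (MI.sub ?_ (MI.scalar lm_mem _)).add (MI.scalar hlm _)
  exact (MI.smul _ (MI_conj _)).neg

lemma half_mem {x : RK K} (h : (2:RK K) * x ∈ Ig K) : x ∈ Ig K := by
  have h2 := Ideal.mul_mem_left _ (C (2⁻¹ : ℂ)) h
  have : C (2⁻¹ : ℂ) * ((2:RK K) * x) = x := by
    rw [← mul_assoc]
    have h3 : C (2:ℂ) = (2:RK K) := map_ofNat _ 2
    rw [← h3, ← map_mul]
    norm_num
  rwa [this] at h2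

lemma MI_half {M : M2 K} (h : MI K ((2:RK K) • M)) : MI K M := by
  intro a b
  have := h a b
  rw [Matrix.smul_apply, smul_eq_mul] at this
  exact half_mem this


def Phi (K m : ℕ) : M2 K :=
  (∑ l ∈ Finset.range (2*K+2), if m < l then cS K m l • eta K l else 0)
  - (∑ j ∈ Finset.range (2*K+2), if j < m then cS K j m • eta K j else 0)
  + ((-1:RK K)^(m+1) * X (sv K m)) • Nm K

lemma sum_tail (m : ℕ) (hm : m+1 ≤ 2*K+2) :
    ∑ l ∈ Finset.range (2*K+2), (if m < l then Tt K l else 0)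
      = Gm K (2*K+2) - Gm K (m+1) := by
  rw [← Finset.sum_filter]
  have hf : (Finset.range (2*K+2)).filter (fun l => m < l) = Finset.Ico (m+1) (2*K+2) := by
    ext t
    simp only [Finset.mem_filter, Finset.mem_range, Finset.mem_Ico]
    omega
  rw [hf, Finset.sum_Ico_eq_sub _ hm, telS, telS]
  abel

lemma sum_head (m : ℕ) (hm : m ≤ 2*K+2) :
    ∑ j ∈ Finset.range (2*K+2), (if j < m then Tt K j else 0) = Gm K m - sg K := by
  rw [← Finset.sum_filter]
  have hf : (Finset.range (2*K+2)).filter (fun j => j < m) = Finset.range m := by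
    ext t
    simp only [Finset.mem_filter, Finset.mem_range]
    omega
  rw [hf, telS]

lemma Lsum_decomp (m : ℕ) :
    (∑ l ∈ Finset.range (2*K+2), if m < l then cS K m l • eta K l else 0)
    = ((∑ l ∈ Finset.range (2*K+2),
          if m < l then (if m+1 = l then (1:RK K) else 0) • eta K l else 0)
      - (∑ l ∈ Finset.range (2*K+2),
          if m < l then (if m = 0 ∧ l = 2*K+1 then (X (muVar K)^2 : RK K) else 0) • eta K l else 0))
      + ∑ l ∈ Finset.range (2*K+2),
          if m < l then (((-1:RK K)^(m+l+1) * X (sv K m) * X (sv K l))) • eta K l else 0 := by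
  rw [← Finset.sum_sub_distrib, ← Finset.sum_add_distrib]
  refine Finset.sum_congr rfl fun l _ => ?_
  by_cases h : m < l
  · simp only [if_pos h, cS, add_smul, sub_smul]
  · simp [h]

lemma Jsum_decomp (m : ℕ) :
    (∑ j ∈ Finset.range (2*K+2), if j < m then cS K j m • eta K j else 0)
    = ((∑ j ∈ Finset.range (2*K+2),
          if j < m then (if j+1 = m then (1:RK K) else 0) • eta K j else 0)
      - (∑ j ∈ Finset.range (2*K+2),
          if j < m then (if j = 0 ∧ m = 2*K+1 then (X (muVar K)^2 : RK K) else 0) • eta K j else 0))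
      + ∑ j ∈ Finset.range (2*K+2),
          if j < m then (((-1:RK K)^(j+m+1) * X (sv K j) * X (sv K m))) • eta K j else 0 := by
  rw [← Finset.sum_sub_distrib, ← Finset.sum_add_distrib]
  refine Finset.sum_congr rfl fun j _ => ?_
  by_cases h : j < m
  · simp only [if_pos h, cS, add_smul, sub_smul]
  · simp [h]

lemma Ldelta (m : ℕ) (hm : m+1 < 2*K+2) :
    (∑ l ∈ Finset.range (2*K+2),
        if m < l then (if m+1 = l then (1:RK K) else 0) • eta K l else 0)
      = eta K (m+1) := by
  have hpt : ∀ l ∈ Finset.range (2*K+2),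
      (if m < l then (if m+1 = l then (1:RK K) else 0) • eta K l else 0)
        = if l = m+1 then eta K l else 0 := by
    intro l _
    split_ifs with h1 h2 h3 <;> first | (exfalso; omega) | simp
  rw [Finset.sum_congr rfl hpt, Finset.sum_ite_eq' (Finset.range (2*K+2)) (m+1) (fun l => eta K l)]
  simp [Finset.mem_range, hm]

lemma Jdelta (k : ℕ) (hk : k+1 < 2*K+2) :
    (∑ j ∈ Finset.range (2*K+2),
        if j < k+1 then (if j+1 = k+1 then (1:RK K) else 0) • eta K j else 0)
      = eta K k := by
  have hpt : ∀ j ∈ Finset.range (2*K+2),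
      (if j < k+1 then (if j+1 = k+1 then (1:RK K) else 0) • eta K j else 0)
        = if j = k then eta K j else 0 := by
    intro j _
    split_ifs with h1 h2 h3 <;> first | (exfalso; omega) | simp
  rw [Finset.sum_congr rfl hpt, Finset.sum_ite_eq' (Finset.range (2*K+2)) k (fun j => eta K j)]
  simp only [Finset.mem_range, if_pos (by omega : k < 2*K+2)]

lemma Lbdry0 :
    (∑ l ∈ Finset.range (2*K+2),
        if 0 < l then (if (0:ℕ) = 0 ∧ l = 2*K+1 then (X (muVar K)^2 : RK K) else 0) • eta K l else 0)
      = (X (muVar K)^2 : RK K) • eta K (2*K+1) := by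
  have hpt : ∀ l ∈ Finset.range (2*K+2),
      (if 0 < l then (if (0:ℕ) = 0 ∧ l = 2*K+1 then (X (muVar K)^2 : RK K) else 0) • eta K l else 0)
        = if l = 2*K+1 then (X (muVar K)^2 : RK K) • eta K l else 0 := by
    intro l _
    split_ifs with h1 h2 h3 <;> first | (exfalso; omega) | simp
  rw [Finset.sum_congr rfl hpt,
    Finset.sum_ite_eq' (Finset.range (2*K+2)) (2*K+1) (fun l => (X (muVar K)^2 : RK K) • eta K l)]
  simp only [Finset.mem_range, if_pos (by omega : 2*K+1 < 2*K+2)]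

lemma Lbdry_ne (m : ℕ) (hm : m ≠ 0) :
    (∑ l ∈ Finset.range (2*K+2),
        if m < l then (if m = 0 ∧ l = 2*K+1 then (X (muVar K)^2 : RK K) else 0) • eta K l else 0)
      = 0 := by
  refine Finset.sum_eq_zero fun l _ => ?_
  split_ifs with h1 h2 <;> first | (exfalso; omega) | simp

lemma Jbdry_top :
    (∑ j ∈ Finset.range (2*K+2),
        if j < 2*K+1 then (if j = 0 ∧ 2*K+1 = 2*K+1 then (X (muVar K)^2 : RK K) else 0) • eta K j else 0)
      = (X (muVar K)^2 : RK K) • eta K 0 := by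
  have hpt : ∀ j ∈ Finset.range (2*K+2),
      (if j < 2*K+1 then (if j = 0 ∧ 2*K+1 = 2*K+1 then (X (muVar K)^2 : RK K) else 0) • eta K j else 0)
        = if j = 0 then (X (muVar K)^2 : RK K) • eta K j else 0 := by
    intro j _
    split_ifs with h1 h2 h3 <;> first | (exfalso; omega) | simp
  rw [Finset.sum_congr rfl hpt,
    Finset.sum_ite_eq' (Finset.range (2*K+2)) 0 (fun j => (X (muVar K)^2 : RK K) • eta K j)]
  simp only [Finset.mem_range, if_pos (by omega : 0 < 2*K+2)]

lemma Jbdry_ne (m : ℕ) (hm : m ≠ 2*K+1) :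
    (∑ j ∈ Finset.range (2*K+2),
        if j < m then (if j = 0 ∧ m = 2*K+1 then (X (muVar K)^2 : RK K) else 0) • eta K j else 0)
      = 0 := by
  refine Finset.sum_eq_zero fun j _ => ?_
  split_ifs with h1 h2 <;> first | (exfalso; omega) | simp

lemma Lquad (m : ℕ) (hm : m+1 ≤ 2*K+2) :
    (2:RK K) • (∑ l ∈ Finset.range (2*K+2),
        if m < l then (((-1:RK K)^(m+l+1) * X (sv K m) * X (sv K l))) • eta K l else 0)
      = ((-1:RK K)^m * X (sv K m)) • (Gm K (2*K+2) - Gm K (m+1)) := by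
  rw [Finset.smul_sum]
  have hpt : ∀ l ∈ Finset.range (2*K+2),
      (2:RK K) • (if m < l then (((-1:RK K)^(m+l+1) * X (sv K m) * X (sv K l))) • eta K l else 0)
        = ((-1:RK K)^m * X (sv K m)) • (if m < l then Tt K l else 0) := by
    intro l _
    split_ifs with h
    · rw [Tt, smul_smul, smul_smul]
      refine congrArg (· • eta K l) ?_
      rw [show m+l+1 = m+(l+1) by omega, pow_add]
      ring
    · simp
  rw [Finset.sum_congr rfl hpt, ← Finset.smul_sum, sum_tail m hm]

lemma Jquad (m : ℕ) (hm : m ≤ 2*K+2) :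
    (2:RK K) • (∑ j ∈ Finset.range (2*K+2),
        if j < m then (((-1:RK K)^(j+m+1) * X (sv K j) * X (sv K m))) • eta K j else 0)
      = ((-1:RK K)^m * X (sv K m)) • (Gm K m - sg K) := by
  rw [Finset.smul_sum]
  have hpt : ∀ j ∈ Finset.range (2*K+2),
      (2:RK K) • (if j < m then (((-1:RK K)^(j+m+1) * X (sv K j) * X (sv K m))) • eta K j else 0)
        = ((-1:RK K)^m * X (sv K m)) • (if j < m then Tt K j else 0) := by
    intro j _
    split_ifs with h
    · rw [Tt, smul_smul, smul_smul]
      refine congrArg (· • eta K j) ?_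
      rw [show j+m+1 = m+(j+1) by omega, pow_add]
      ring
    · simp
  rw [Finset.sum_congr rfl hpt, ← Finset.smul_sum, sum_head m hm]

lemma Lsum_top :
    (∑ l ∈ Finset.range (2*K+2), if 2*K+1 < l then cS K (2*K+1) l • eta K l else 0) = 0 := by
  refine Finset.sum_eq_zero fun l hl => ?_
  rw [Finset.mem_range] at hl
  rw [if_neg (by omega)]

lemma Jsum_zero :
    (∑ j ∈ Finset.range (2*K+2), if j < 0 then cS K j 0 • eta K j else 0) = 0 := by
  refine Finset.sum_eq_zero fun j _ => ?_
  rw [if_neg (by omega)]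


lemma Gm_zero : Gm K 0 = sg K := by
  show Pm K 0 * sg K * Pmi K 0 = sg K
  simp [Pm, Pmi]

lemma MI_Phi_mid (k : ℕ) (hk : k+3 ≤ 2*K+2) : MI K (Phi K (k+1)) := by
  apply MI_half
  have key : (2:RK K) • Phi K (k+1)
      = ((-1:RK K)^(k+1) * X (sv K (k+1))) • (Gm K (2*K+2) - sg K)
        + ((-1:RK K)^(k+1) * X (sv K (k+1)) * (2 * (lm K - 1))) • gg K := by
    rw [Phi, Lsum_decomp, Jsum_decomp,
      Ldelta (k+1) (by omega), Jdelta k (by omega),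
      Lbdry_ne (k+1) (by omega), Jbdry_ne (k+1) (by omega)]
    simp only [smul_add, smul_sub, sub_zero]
    rw [Lquad (k+1) (by omega), Jquad (k+1) (by omega)]
    rw [L6 k, tel (k+1), Nm_eq, Tt]
    have hp : (-1:RK K)^(k+1+1) = -(-1:RK K)^(k+1) := by rw [pow_succ]; ring
    rw [hp]
    rcases Nat.mod_two_eq_zero_or_one (k+1) with h | h
    · rw [neg_one_pow_even h]; module
    · rw [neg_one_pow_odd h]; module
  rw [key]
  refine (MI.smul _ MI_Gn).add (MI.scalar ?_ _)
  exact Ideal.mul_mem_left _ _ (Ideal.mul_mem_left _ _ lm_mem)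

lemma MI_Phi_zero : MI K (Phi K 0) := by
  apply MI_half
  have key : (2:RK K) • Phi K 0
      = (X (sv K 0) : RK K) • (Gm K (2*K+2) - sg K)
        + ((X (sv K 0) * (2 * (lm K - 1)) : RK K)) • gg K
        + (2:RK K) • (ff K - (X (muVar K)^2 : RK K) • eta K (2*K+1)) := by
    rw [Phi, Lsum_decomp, Jsum_zero,
      Ldelta 0 (by omega), Lbdry0]
    simp only [smul_add, smul_sub, sub_zero]
    rw [Lquad 0 (by omega)]
    rw [L60, tel 0, Gm_zero, Nm_eq, Tt]
    simp only [pow_zero, pow_one, zero_add, one_mul]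
    module
  rw [key]
  refine ((MI.smul _ MI_Gn).add (MI.scalar ?_ _)).add (MI.smul _ MI_b1)
  exact Ideal.mul_mem_left _ _ (Ideal.mul_mem_left _ _ lm_mem)

lemma MI_Phi_top : MI K (Phi K (2*K+1)) := by
  apply MI_half
  have h1 : (-1:RK K)^(2*K+1) = -1 := neg_one_pow_odd (by omega)
  have h2 : (-1:RK K)^(2*K+1+1) = 1 := neg_one_pow_even (by omega)
  have key : (2:RK K) • Phi K (2*K+1)
      = (-(X (sv K (2*K+1))) : RK K) • (Gm K (2*K+2) - sg K)
        + ((X (sv K (2*K+1)) * (-2 * (lm K - 1)) : RK K)) • gg K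
        + (2:RK K) • ((X (muVar K)^2 : RK K) • eta K 0 - eta K (2*K+2)) := by
    rw [Phi, Lsum_top, Jsum_decomp, Jdelta (2*K) (by omega), Jbdry_top]
    simp only [smul_add, smul_sub, sub_zero]
    rw [Jquad (2*K+1) (by omega)]
    have hL6 := L6 (K := K) (2*K)
    rw [show 2*K+2 = 2*K+1+1 from rfl] at hL6
    rw [show (2*K)+1+1 = 2*K+2 from rfl] at hL6
    have htel := tel (K := K) (2*K+1)
    rw [htel, hL6, Nm_eq, Tt]
    rw [show (2*K)+1 = 2*K+1 from rfl, h1, h2]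
    module
  rw [key]
  refine ((MI.smul _ MI_Gn).add (MI.scalar ?_ _)).add (MI.smul _ MI_b2)
  exact Ideal.mul_mem_left _ _ (Ideal.mul_mem_left _ _ lm_mem)

lemma MI_Phi (m : ℕ) (hm : m < 2*K+2) : MI K (Phi K m) := by
  rcases Nat.eq_zero_or_pos m with h0 | h0
  · rw [h0]; exact MI_Phi_zero
  · by_cases htop : m = 2*K+1
    · rw [htop]; exact MI_Phi_top
    · obtain ⟨k, rfl⟩ : ∃ k, m = k+1 := ⟨m-1, by omega⟩
      exact MI_Phi_mid k (by omega)


lemma sVar_eq_sv (l : Fin (2*K+2)) : sVar K l = sv K (l:ℕ) :=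
  Fin.ext (by simp [sVar, sv, Nat.mod_eq_of_lt l.isLt])

lemma cSSP_eq (j l : Fin (2*K+2)) : cSSP K j l = cS K (j:ℕ) (l:ℕ) := by
  simp [cSSP, cS, sVar_eq_sv]

lemma sVar_ne_lam (m : Fin (2*K+2)) : sVar K m ≠ lamVar K := by
  have := m.isLt
  exact Fin.ne_of_val_ne (by simp [sVar, lamVar]; omega)

lemma sVar_ne_mu (m : Fin (2*K+2)) : sVar K m ≠ muVar K := by
  have := m.isLt
  exact Fin.ne_of_val_ne (by simp [sVar, muVar]; omega)

lemma pdX_s (j m : Fin (2*K+2)) :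
    pderiv (sVar K j) (X (sVar K m) : RK K) = if j = m then 1 else 0 := by
  split_ifs with h
  · rw [h, pderiv_X_self]
  · refine pderiv_X_of_ne (fun hc => h ?_)
    have h2 := congrArg Fin.val hc
    simp only [sVar] at h2
    exact Fin.ext h2.symm

lemma pdlam_s (m : Fin (2*K+2)) : pderiv (sVar K m) (X (lamVar K) : RK K) = 0 :=
  pderiv_X_of_ne (sVar_ne_lam m).symm

lemma Dlam_X_s (m : Fin (2*K+2)) : Dlam K (X (sVar K m)) = 0 := by
  unfold Dlam
  rw [pderiv_X_of_ne (sVar_ne_lam m), pderiv_X_of_ne (sVar_ne_mu m)]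
  simp

lemma Dlam_X_lam : Dlam K (X (lamVar K)) = 1 := by
  unfold Dlam
  rw [pderiv_X_self, pderiv_X_of_ne lam_ne_mu]
  simp

lemma brX_s (m : Fin (2*K+2)) (g : RK K) :
    fnBrP K (X (sVar K m)) g =
      (∑ l : Fin (2*K+2), if (m:ℕ) < (l:ℕ) then cSSP K m l * pderiv (sVar K l) g else 0)
      - (∑ j : Fin (2*K+2), if (j:ℕ) < (m:ℕ) then cSSP K j m * pderiv (sVar K j) g else 0)
      + cSLP K m * Dlam K g := by
  unfold fnBrP
  have hpt : ∀ j l : Fin (2*K+2),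
      (if (j:ℕ) < (l:ℕ) then
        cSSP K j l * (pderiv (sVar K j) (X (sVar K m)) * pderiv (sVar K l) g
          - pderiv (sVar K l) (X (sVar K m)) * pderiv (sVar K j) g) else 0)
      = (if j = m then (if (m:ℕ) < (l:ℕ) then cSSP K m l * pderiv (sVar K l) g else 0) else 0)
        - (if l = m then (if (j:ℕ) < (m:ℕ) then cSSP K j m * pderiv (sVar K j) g else 0) else 0) := by
    intro j l
    rw [pdX_s, pdX_s]
    by_cases hj : j = m <;> by_cases hl : l = m
    · rw [hj, hl]; simp
    · rw [hj, if_neg hl]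
      split_ifs with h <;> ring
    · rw [hl, if_neg hj]
      split_ifs with h <;> ring
    · rw [if_neg hj, if_neg hl]
      split_ifs with h <;> ring
  have hdd : (∑ j : Fin (2*K+2), ∑ l : Fin (2*K+2),
      if (j:ℕ) < (l:ℕ) then
        cSSP K j l * (pderiv (sVar K j) (X (sVar K m)) * pderiv (sVar K l) g
          - pderiv (sVar K l) (X (sVar K m)) * pderiv (sVar K j) g) else 0)
      = (∑ l : Fin (2*K+2), if (m:ℕ) < (l:ℕ) then cSSP K m l * pderiv (sVar K l) g else 0)
        - (∑ j : Fin (2*K+2), if (j:ℕ) < (m:ℕ) then cSSP K j m * pderiv (sVar K j) g else 0) := by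
    rw [Finset.sum_congr rfl (fun j _ => Finset.sum_congr rfl (fun l _ => hpt j l))]
    rw [Finset.sum_congr rfl (fun j _ => Finset.sum_sub_distrib _ _), Finset.sum_sub_distrib]
    congr 1
    · rw [Finset.sum_congr rfl (fun j (_ : j ∈ Finset.univ) => ?_),
        Finset.sum_ite_eq' Finset.univ m
          (fun _ => ∑ l : Fin (2*K+2), if (m:ℕ) < (l:ℕ) then cSSP K m l * pderiv (sVar K l) g else 0)]
      · simp
      · split_ifs with h <;> simp
    · refine Finset.sum_congr rfl fun j _ => ?_
      rw [Finset.sum_ite_eq' Finset.univ m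
        (fun _ => if (j:ℕ) < (m:ℕ) then cSSP K j m * pderiv (sVar K j) g else 0)]
      simp
  rw [hdd]
  congr 1
  have hpt2 : ∀ j : Fin (2*K+2),
      cSLP K j * (pderiv (sVar K j) (X (sVar K m)) * Dlam K g
        - Dlam K (X (sVar K m)) * pderiv (sVar K j) g)
      = if j = m then cSLP K m * Dlam K g else 0 := by
    intro j
    rw [pdX_s, Dlam_X_s]
    split_ifs with h
    · subst h; ring
    · ring
  rw [Finset.sum_congr rfl (fun j _ => hpt2 j),
    Finset.sum_ite_eq' Finset.univ m (fun _ => cSLP K m * Dlam K g)]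
  simp

lemma brX_lam (g : RK K) :
    fnBrP K (X (lamVar K)) g = -∑ j : Fin (2*K+2), cSLP K j * pderiv (sVar K j) g := by
  unfold fnBrP
  have h1 : (∑ j : Fin (2*K+2), ∑ l : Fin (2*K+2),
      if (j:ℕ) < (l:ℕ) then
        cSSP K j l * (pderiv (sVar K j) (X (lamVar K)) * pderiv (sVar K l) g
          - pderiv (sVar K l) (X (lamVar K)) * pderiv (sVar K j) g) else 0) = 0 := by
    refine Finset.sum_eq_zero fun j _ => Finset.sum_eq_zero fun l _ => ?_
    rw [pdlam_s, pdlam_s]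
    split_ifs <;> ring
  rw [h1, zero_add]
  rw [← Finset.sum_neg_distrib]
  refine Finset.sum_congr rfl fun j _ => ?_
  rw [pdlam_s, Dlam_X_lam]
  ring


lemma pd_Fm1 (l : Fin (2*K+2)) (a b : Fin 2) :
    pderiv (sVar K l) ((Fm K - 1) a b) = (eta K (l:ℕ) * Fm K) a b := by
  rw [Matrix.sub_apply, map_sub]
  have hone : pderiv (sVar K l) ((1 : M2 K) a b) = 0 := by
    rw [Matrix.one_apply]
    split_ifs <;> simp
  rw [hone, sub_zero, sVar_eq_sv]
  exact congrArg (fun M : M2 K => M a b) (dmap_Fm_s (l := (l:ℕ)) l.isLt)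

lemma lamDlam_mat :
    (X (lamVar K) : RK K) • (Pm K (2*K+2) * !![1,0;0,0])
      - ((X (lamVar K) * X (muVar K)^2 : RK K)) • (Pm K (2*K+2) * !![0,0;0,1])
      = Fm K * Nm K := by
  rw [← mul_smul_comm, ← mul_smul_comm, ← mul_sub]
  rw [show Fm K * Nm K = Pm K (2*K+2) * (Dm K * Nm K) from by rw [Fm, mul_assoc]]
  congr 1
  refine Matrix.ext fun i j => ?_
  fin_cases i <;> fin_cases j <;>
    (simp [Dm, Nm, lm, Matrix.mul_apply, Fin.sum_univ_two]; try ring)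

lemma dlam_Fm1 (a b : Fin 2) :
    (X (lamVar K) : RK K) * Dlam K ((Fm K - 1) a b) = (Fm K * Nm K) a b := by
  have hsub : Dlam K ((Fm K - 1) a b) = Dlam K (Fm K a b) := by
    rw [Matrix.sub_apply]
    unfold Dlam
    rw [map_sub, map_sub]
    have h1 : pderiv (lamVar K) ((1 : M2 K) a b) = 0 := by
      rw [Matrix.one_apply]; split_ifs <;> simp
    have h2 : pderiv (muVar K) ((1 : M2 K) a b) = 0 := by
      rw [Matrix.one_apply]; split_ifs <;> simp
    rw [h1, h2]
    ring
  rw [hsub]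
  have h1 : pderiv (lamVar K) (Fm K a b) = ((Pm K (2*K+2) * !![1,0;0,0] : M2 K)) a b :=
    congrArg (fun M : M2 K => M a b) dmap_Fm_lam
  have h2 : pderiv (muVar K) (Fm K a b) = ((Pm K (2*K+2) * !![0,0;0,1] : M2 K)) a b :=
    congrArg (fun M : M2 K => M a b) dmap_Fm_mu
  have h3 := congrArg (fun M : M2 K => M a b) (lamDlam_mat (K := K))
  simp only [Matrix.sub_apply, Matrix.smul_apply, smul_eq_mul] at h3
  unfold Dlam
  rw [h1, h2, ← h3]
  ring

lemma mul_Fm_split (A : M2 K) : A * Fm K = A * (Fm K - 1) + A := by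
  rw [mul_sub, mul_one]; abel

lemma Fm_mul_split (A : M2 K) : Fm K * A = (Fm K - 1) * A + A := by
  rw [sub_mul, one_mul]; abel

lemma Phi_apply (m : ℕ) (a b : Fin 2) :
    Phi K m a b
      = (∑ l ∈ Finset.range (2*K+2), if m < l then cS K m l * eta K l a b else 0)
        - (∑ j ∈ Finset.range (2*K+2), if j < m then cS K j m * eta K j a b else 0)
        + ((-1:RK K)^(m+1) * X (sv K m)) * Nm K a b := by
  rw [Phi, Matrix.add_apply, Matrix.sub_apply, Matrix.smul_apply, smul_eq_mul,
    Matrix.sum_apply, Matrix.sum_apply]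
  congr 2
  · refine Finset.sum_congr rfl fun l _ => ?_
    split_ifs <;> simp
  · refine Finset.sum_congr rfl fun j _ => ?_
    split_ifs <;> simp

lemma main_s (m : Fin (2*K+2)) (a b : Fin 2) :
    fnBrP K (X (sVar K m)) ((Fm K - 1) a b) ∈ Ig K := by
  rw [brX_s]
  have conv1 : (∑ l : Fin (2*K+2),
      if (m:ℕ) < (l:ℕ) then cSSP K m l * pderiv (sVar K l) ((Fm K - 1) a b) else 0)
      = ∑ l ∈ Finset.range (2*K+2),
          if (m:ℕ) < l then cS K (m:ℕ) l * ((eta K l * (Fm K - 1)) a b)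
            + cS K (m:ℕ) l * (eta K l a b) else 0 := by
    rw [← Fin.sum_univ_eq_sum_range (fun l =>
      if (m:ℕ) < l then cS K (m:ℕ) l * ((eta K l * (Fm K - 1)) a b)
        + cS K (m:ℕ) l * (eta K l a b) else 0) (2*K+2)]
    refine Finset.sum_congr rfl fun l _ => ?_
    by_cases h : (m:ℕ) < (l:ℕ)
    · rw [if_pos h, if_pos h, pd_Fm1, cSSP_eq, mul_Fm_split (eta K (l:ℕ)),
        Matrix.add_apply, mul_add]
    · rw [if_neg h, if_neg h]
  have conv2 : (∑ j : Fin (2*K+2),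
      if (j:ℕ) < (m:ℕ) then cSSP K j m * pderiv (sVar K j) ((Fm K - 1) a b) else 0)
      = ∑ j ∈ Finset.range (2*K+2),
          if j < (m:ℕ) then cS K j (m:ℕ) * ((eta K j * (Fm K - 1)) a b)
            + cS K j (m:ℕ) * (eta K j a b) else 0 := by
    rw [← Fin.sum_univ_eq_sum_range (fun j =>
      if j < (m:ℕ) then cS K j (m:ℕ) * ((eta K j * (Fm K - 1)) a b)
        + cS K j (m:ℕ) * (eta K j a b) else 0) (2*K+2)]
    refine Finset.sum_congr rfl fun j _ => ?_
    by_cases h : (j:ℕ) < (m:ℕ)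
    · rw [if_pos h, if_pos h, pd_Fm1, cSSP_eq, mul_Fm_split (eta K (j:ℕ)),
        Matrix.add_apply, mul_add]
    · rw [if_neg h, if_neg h]
  have conv3 : cSLP K m * Dlam K ((Fm K - 1) a b)
      = (-1:RK K)^((m:ℕ)+1) * X (sv K (m:ℕ)) * (((Fm K - 1) * Nm K) a b)
        + (-1:RK K)^((m:ℕ)+1) * X (sv K (m:ℕ)) * (Nm K a b) := by
    rw [cSLP, sVar_eq_sv, mul_assoc, dlam_Fm1, Fm_mul_split (Nm K), Matrix.add_apply,
      mul_add]
  rw [conv1, conv2, conv3]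
  rw [Finset.sum_congr rfl (fun l (_ : l ∈ Finset.range (2*K+2)) =>
      (by split_ifs <;> simp :
        (if (m:ℕ) < l then cS K (m:ℕ) l * ((eta K l * (Fm K - 1)) a b)
            + cS K (m:ℕ) l * (eta K l a b) else 0)
        = (if (m:ℕ) < l then cS K (m:ℕ) l * ((eta K l * (Fm K - 1)) a b) else 0)
          + (if (m:ℕ) < l then cS K (m:ℕ) l * (eta K l a b) else 0))),
    Finset.sum_congr rfl (fun j (_ : j ∈ Finset.range (2*K+2)) =>
      (by split_ifs <;> simp :
        (if j < (m:ℕ) then cS K j (m:ℕ) * ((eta K j * (Fm K - 1)) a b)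
            + cS K j (m:ℕ) * (eta K j a b) else 0)
        = (if j < (m:ℕ) then cS K j (m:ℕ) * ((eta K j * (Fm K - 1)) a b) else 0)
          + (if j < (m:ℕ) then cS K j (m:ℕ) * (eta K j a b) else 0))),
    Finset.sum_add_distrib, Finset.sum_add_distrib]
  have hre : ∀ A B C D E F : RK K, (A + B) - (C + D) + (E + F)
      = (A - C + E) + (B - D + F) := fun _ _ _ _ _ _ => by ring
  rw [hre]
  have hPhi : (∑ l ∈ Finset.range (2*K+2), if (m:ℕ) < l then cS K (m:ℕ) l * (eta K l a b) else 0)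
      - (∑ j ∈ Finset.range (2*K+2), if j < (m:ℕ) then cS K j (m:ℕ) * (eta K j a b) else 0)
      + (-1:RK K)^((m:ℕ)+1) * X (sv K (m:ℕ)) * (Nm K a b) = Phi K (m:ℕ) a b := by
    rw [Phi_apply]
  rw [hPhi]
  refine Ideal.add_mem _ ?_ (MI_Phi (m:ℕ) m.isLt a b)
  refine Ideal.add_mem _ (Ideal.sub_mem _ ?_ ?_) ?_
  · refine Ideal.sum_mem _ fun l _ => ?_
    split_ifs
    · exact Ideal.mul_mem_left _ _ ((MI.mulL (eta K l) MI_F1) a b)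
    · exact Ideal.zero_mem _
  · refine Ideal.sum_mem _ fun j _ => ?_
    split_ifs
    · exact Ideal.mul_mem_left _ _ ((MI.mulL (eta K j) MI_F1) a b)
    · exact Ideal.zero_mem _
  · exact Ideal.mul_mem_left _ _ ((MI.mulR MI_F1 (Nm K)) a b)

lemma main_lam (a b : Fin 2) :
    fnBrP K (X (lamVar K)) ((Fm K - 1) a b) ∈ Ig K := by
  have hPsi : MI K (∑ j ∈ Finset.range (2*K+2), ((-1:RK K)^(j+1) * X (sv K j)) • eta K j) := by
    apply MI_half
    have h2 : (2:RK K) • (∑ j ∈ Finset.range (2*K+2), ((-1:RK K)^(j+1) * X (sv K j)) • eta K j)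
        = Gm K (2*K+2) - sg K := by
      rw [Finset.smul_sum, ← telS (2*K+2)]
      refine Finset.sum_congr rfl fun j _ => ?_
      rw [Tt, smul_smul]
      congr 1
      ring
    rw [h2]
    exact MI_Gn
  rw [brX_lam]
  have conv : (∑ j : Fin (2*K+2), cSLP K j * pderiv (sVar K j) ((Fm K - 1) a b))
      = ∑ j ∈ Finset.range (2*K+2),
          ((-1:RK K)^(j+1) * X (sv K j) * X (lamVar K) * ((eta K j * (Fm K - 1)) a b)
            + X (lamVar K) * ((((-1:RK K)^(j+1) * X (sv K j)) • eta K j) a b)) := by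
    rw [← Fin.sum_univ_eq_sum_range (fun j =>
        ((-1:RK K)^(j+1) * X (sv K j) * X (lamVar K) * ((eta K j * (Fm K - 1)) a b)
          + X (lamVar K) * ((((-1:RK K)^(j+1) * X (sv K j)) • eta K j) a b))) (2*K+2)]
    refine Finset.sum_congr rfl fun j _ => ?_
    rw [cSLP, pd_Fm1, sVar_eq_sv, mul_Fm_split (eta K (j:ℕ)), Matrix.add_apply, mul_add,
      Matrix.smul_apply, smul_eq_mul]
    ring
  rw [conv, Finset.sum_add_distrib]
  refine neg_mem (Ideal.add_mem _ ?_ ?_)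
  · refine Ideal.sum_mem _ fun j _ => ?_
    exact Ideal.mul_mem_left _ _ ((MI.mulL (eta K j) MI_F1) a b)
  · have h3 : (∑ j ∈ Finset.range (2*K+2),
        X (lamVar K) * ((((-1:RK K)^(j+1) * X (sv K j)) • eta K j) a b))
        = X (lamVar K) * ((∑ j ∈ Finset.range (2*K+2),
            ((-1:RK K)^(j+1) * X (sv K j)) • eta K j) a b) := by
      rw [Matrix.sum_apply, Finset.mul_sum]
    rw [h3]
    exact Ideal.mul_mem_left _ _ (hPsi a b)


lemma listprod : ∀ j : ℕ, j ≤ K+1 →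
    (List.ofFn fun i : Fin j => Em K (2*(i:ℕ)) * Em K (2*(i:ℕ)+1)).prod = Pm K (2*j)
  | 0, _ => by simp [Pm]
  | (j+1), hj => by
    rw [List.ofFn_succ', List.prod_concat]
    simp only [Fin.coe_castSucc, Fin.val_last]
    rw [listprod j (by omega)]
    have e1 : Pm K (2*(j+1)) = Pm K (2*j+1) * Em K (2*j+1) := by
      rw [show 2*(j+1) = (2*j+1)+1 by ring]
      rfl
    have e2 : Pm K (2*j+1) = Pm K (2*j) * Em K (2*j) := rfl
    rw [e1, e2, mul_assoc]

lemma FmatP_eq : FmatP K = Fm K := by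
  rw [FmatP, Fm]
  have hfun : (fun i : Fin (K+1) =>
      UmatP K (X (sVar K ⟨2*(i:ℕ), by have := i.isLt; omega⟩)) *
      LmatP K (X (sVar K ⟨2*(i:ℕ)+1, by have := i.isLt; omega⟩)))
      = fun i : Fin (K+1) => Em K (2*(i:ℕ)) * Em K (2*(i:ℕ)+1) := by
    funext i
    have hi := i.isLt
    have h1 : Em K (2*(i:ℕ)) = UmatP K (X (sVar K ⟨2*(i:ℕ), by omega⟩)) := by
      rw [Em, if_pos (by omega)]
      rw [show sv K (2*(i:ℕ)) = sVar K ⟨2*(i:ℕ), by omega⟩ from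
        Fin.ext (by simp [sv, sVar, Nat.mod_eq_of_lt (show 2*(i:ℕ) < 2*K+2 by omega)])]
      rfl
    have h2 : Em K (2*(i:ℕ)+1) = LmatP K (X (sVar K ⟨2*(i:ℕ)+1, by omega⟩)) := by
      rw [Em, if_neg (by omega)]
      rw [show sv K (2*(i:ℕ)+1) = sVar K ⟨2*(i:ℕ)+1, by omega⟩ from
        Fin.ext (by simp [sv, sVar, Nat.mod_eq_of_lt (show 2*(i:ℕ)+1 < 2*K+2 by omega)])]
      rfl
    rw [h1, h2]
  rw [hfun, listprod (K+1) le_rfl]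
  rw [show 2*(K+1) = 2*K+2 by ring]
  rfl

end FNwork

/-- the locus `{F_K = 1}` is a Poisson subvariety: in the Laurent-polynomial
ring `ℂ[s, λ, λ⁻¹]` (encoded as `ℂ[s, λ, μ]` together with the relation `λμ − 1`),
for every coordinate `x` among `s_1, …, s_{2K+2}, λ` and every matrix entry `(a,b)`,
the bracket `{x, (F_K − 1)_{ab}}_{FN}` lies in the ideal generated by the four entries
of `F_K − 1` (together with the encoding relation `λμ − 1`). -/
theorem fn_locus_poisson_subvariety (K : ℕ) (hK : 1 ≤ K) (i : Fin (2*K+3)) (a b : Fin 2) :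
    fnBrP K (X (coordVar K i)) ((FmatP K - 1) a b) ∈
      Ideal.span ({(FmatP K - 1) 0 0, (FmatP K - 1) 0 1,
                   (FmatP K - 1) 1 0, (FmatP K - 1) 1 1,
                   X (lamVar K) * X (muVar K) - 1} : Set (RK K)) := by
  rw [FNwork.FmatP_eq]
  by_cases h : (i:ℕ) < 2*K+2
  · rw [show coordVar K i = sVar K ⟨(i:ℕ), h⟩ from dif_pos h]
    exact FNwork.main_s ⟨(i:ℕ), h⟩ a b
  · rw [show coordVar K i = lamVar K from dif_neg h]
    exact FNwork.main_lam a b
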